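/- R*(C₅, δ) ≥ (1/2)log 5 + (1/2)(log 5 − H₅(2δ)) for 0 ≤ δ < 2/5, where H₅(x) = x log 4 − x log x − (1−x)log(1−x); i.e., there exist codes in (Z/5Z)^n of rate (1/2)log5 + (1/2)R_GV(5, 2δ) and minimum cycle-semimetric distance ≥ δn (asymptotically). -/

import Mathlib

open Finset Real Filter

/-- The cycle semimetric on `ZMod q`. -/
def cycDist (q : ℕ) (v v' : ZMod q) : ℕ∞ :=
  if v = v' then 0 else if v - v' = 1 ∨ v' - v = 1 then 1 else ⊤

/-- Additive extension of the cycle semimetric to `(ZMod q)^n`. -/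
def cycDistN {q n : ℕ} (x y : Fin n → ZMod q) : ℕ∞ :=
  ∑ i, cycDist q (x i) (y i)

/-- The `q`-ary entropy-type function `H_q(x) = x log(q-1) − x log x − (1−x) log(1−x)`
for `q = 5`. -/
noncomputable def H5 (x : ℝ) : ℝ :=
  x * Real.log 4 - x * Real.log x - (1 - x) * Real.log (1 - x)

section Aux

lemma H5_nonneg {x : ℝ} (h0 : 0 ≤ x) (h1 : x ≤ 1) : 0 ≤ H5 x := by
  have l1 : x * Real.log x ≤ 0 := mul_nonpos_of_nonneg_of_nonpos h0 (Real.log_nonpos h0 h1)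
  have l2 : (1 - x) * Real.log (1 - x) ≤ 0 :=
    mul_nonpos_of_nonneg_of_nonpos (by linarith) (Real.log_nonpos (by linarith) (by linarith))
  have l3 : 0 ≤ x * Real.log 4 :=
    mul_nonneg h0 (Real.log_nonneg (by norm_num))
  rw [H5]; linarith

lemma ball_card_le (k m : ℕ) (lam : ℝ) (h0 : 0 < lam) (h45 : lam ≤ 4/5)
    (hm : (m:ℝ) ≤ lam * k) :
    ((Finset.univ.filter (fun z : Fin k → ZMod 5 => hammingNorm z ≤ m)).card : ℝ)
      ≤ Real.exp (k * H5 lam) := by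
  have h1 : lam < 1 := lt_of_le_of_lt h45 (by norm_num)
  have h1' : 0 < 1 - lam := by linarith
  set t : ℝ := lam / (4 * (1 - lam)) with ht
  have ht0 : 0 < t := by positivity
  have ht1 : t ≤ 1 := by
    rw [ht, div_le_one (by positivity)]; linarith
  have hsum : ∀ z : Fin k → ZMod 5, t ^ hammingNorm z
      = ∏ i, (if z i = 0 then (1:ℝ) else t) := by
    intro z
    rw [Finset.prod_ite, Finset.prod_const, Finset.prod_const, one_pow, one_mul, hammingNorm]
  have c1 : (Finset.univ.filter (fun a : ZMod 5 => a = 0)).card = 1 := by decide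
  have c2 : (Finset.univ.filter (fun a : ZMod 5 => ¬ a = 0)).card = 4 := by decide
  have htot : ∑ z : Fin k → ZMod 5, t ^ hammingNorm z = (1 + 4*t) ^ k := by
    calc ∑ z : Fin k → ZMod 5, t ^ hammingNorm z
        = ∑ z : Fin k → ZMod 5, ∏ i, (if z i = 0 then (1:ℝ) else t) :=
          Finset.sum_congr rfl fun z _ => hsum z
      _ = ∏ _i : Fin k, ∑ a : ZMod 5, (if a = 0 then (1:ℝ) else t) := by
          rw [← Fintype.piFinset_univ]
          exact Finset.sum_prod_piFinset Finset.univ (fun _ a => if a = 0 then (1:ℝ) else t)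
      _ = (1 + 4*t) ^ k := by
          rw [Finset.sum_ite, Finset.sum_const, Finset.sum_const, c1, c2,
            Finset.prod_const, Finset.card_univ, Fintype.card_fin]
          norm_num
  set B := Finset.univ.filter (fun z : Fin k → ZMod 5 => hammingNorm z ≤ m) with hB
  have key : (B.card : ℝ) * t ^ m ≤ (1 + 4*t) ^ k := by
    rw [← htot]
    calc (B.card : ℝ) * t ^ m = ∑ _z ∈ B, t ^ m := by
          rw [Finset.sum_const, nsmul_eq_mul]
      _ ≤ ∑ z ∈ B, t ^ hammingNorm z := by
          apply Finset.sum_le_sum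
          intro z hz
          exact pow_le_pow_of_le_one ht0.le ht1 (Finset.mem_filter.mp hz).2
      _ ≤ ∑ z : Fin k → ZMod 5, t ^ hammingNorm z := by
          apply Finset.sum_le_sum_of_subset_of_nonneg (Finset.filter_subset _ _)
          intro z _ _; positivity
  have h4t : 1 + 4*t = (1 - lam)⁻¹ := by
    rw [ht]; field_simp
    ring
  have hcard : (B.card : ℝ) ≤ Real.exp ((k:ℝ) * Real.log (1+4*t) - m * Real.log t) := by
    have e1 : Real.exp ((k:ℝ) * Real.log (1+4*t)) = (1+4*t)^k := by
      rw [Real.exp_nat_mul, Real.exp_log (by positivity)]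
    have e2 : Real.exp ((m:ℝ) * Real.log t) = t^m := by
      rw [Real.exp_nat_mul, Real.exp_log ht0]
    rw [Real.exp_sub, e1, e2, le_div_iff₀ (by positivity)]
    exact key
  refine hcard.trans (Real.exp_le_exp.mpr ?_)
  have hlogt : Real.log t = Real.log lam - Real.log 4 - Real.log (1 - lam) := by
    rw [ht, Real.log_div (ne_of_gt h0) (by positivity), Real.log_mul (by norm_num) (ne_of_gt h1')]
    ring
  have hlog4t : Real.log (1 + 4*t) = - Real.log (1 - lam) := by
    rw [h4t, Real.log_inv]
  have hlt0 : Real.log t ≤ 0 := Real.log_nonpos ht0.le ht1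
  have hmono : (m:ℝ) * (- Real.log t) ≤ lam * k * (- Real.log t) :=
    mul_le_mul_of_nonneg_right hm (by linarith)
  rw [hlog4t, H5]
  rw [hlogt] at hmono ⊢
  nlinarith [hmono]

lemma ball_translate (k r : ℕ) (c : Fin k → ZMod 5) :
    (Finset.univ.filter fun x : Fin k → ZMod 5 => hammingDist x c ≤ r).card
      = (Finset.univ.filter fun z : Fin k → ZMod 5 => hammingNorm z ≤ r).card := by
  apply Finset.card_bij' (fun x _ => x - c) (fun z _ => z + c)
  · intro x hx
    simp only [Finset.mem_filter, Finset.mem_univ, true_and] at hx ⊢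
    rwa [hammingDist_comm, hammingDist_eq_hammingNorm, show -c + x = x - c by abel] at hx
  · intro z hz
    simp only [Finset.mem_filter, Finset.mem_univ, true_and] at hz ⊢
    rwa [hammingDist_comm, hammingDist_eq_hammingNorm, show -c + (z + c) = z by abel]
  · intro x _; simp
  · intro z _; simp

lemma gv (k d : ℕ) (hd : 0 < d) : ∃ C : Finset (Fin k → ZMod 5),
    (∀ c ∈ C, ∀ c' ∈ C, c ≠ c' → d ≤ hammingDist c c') ∧
    5 ^ k ≤ C.card *
      (Finset.univ.filter (fun z : Fin k → ZMod 5 => hammingNorm z ≤ d - 1)).card := by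
  classical
  set P : Finset (Fin k → ZMod 5) → Prop :=
    fun C => ∀ c ∈ C, ∀ c' ∈ C, c ≠ c' → d ≤ hammingDist c c' with hP
  have hne : ((Finset.univ.filter P)).Nonempty :=
    ⟨∅, by simp [hP]⟩
  obtain ⟨C, hCmem, hCmax⟩ := Finset.exists_max_image (Finset.univ.filter P) Finset.card hne
  have hPC : P C := (Finset.mem_filter.mp hCmem).2
  refine ⟨C, hPC, ?_⟩
  have cover : ∀ x : Fin k → ZMod 5, ∃ c ∈ C, hammingDist x c ≤ d - 1 := by
    intro x
    by_contra hx
    push_neg at hx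
    have hfar : ∀ c ∈ C, d ≤ hammingDist x c := by
      intro c hc; have := hx c hc; omega
    have hxC : x ∉ C := by
      intro hxC
      have := hfar x hxC
      simp [hammingDist_self] at this
      omega
    have hPins : P (insert x C) := by
      intro c hc c' hc' hne'
      rcases Finset.mem_insert.mp hc with h1 | h1 <;>
        rcases Finset.mem_insert.mp hc' with h2 | h2
      · exact absurd (h1.trans h2.symm) hne'
      · subst h1; exact hfar c' h2
      · subst h2; rw [hammingDist_comm]; exact hfar c h1
      · exact hPC c h1 c' h2 hne'
    have := hCmax (insert x C) (Finset.mem_filter.mpr ⟨Finset.mem_univ _, hPins⟩)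
    rw [Finset.card_insert_of_notMem hxC] at this
    omega
  have hsub : (Finset.univ : Finset (Fin k → ZMod 5)) ⊆
      C.biUnion (fun c => Finset.univ.filter fun x => hammingDist x c ≤ d - 1) := by
    intro x _
    rcases cover x with ⟨c, hc, hdist⟩
    exact Finset.mem_biUnion.mpr ⟨c, hc, Finset.mem_filter.mpr ⟨Finset.mem_univ _, hdist⟩⟩
  have h5k : (Finset.univ : Finset (Fin k → ZMod 5)).card = 5 ^ k := by
    rw [Finset.card_univ, Fintype.card_fun, ZMod.card, Fintype.card_fin]
  calc 5 ^ k = (Finset.univ : Finset (Fin k → ZMod 5)).card := h5k.symm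
    _ ≤ (C.biUnion (fun c => Finset.univ.filter fun x => hammingDist x c ≤ d - 1)).card :=
        Finset.card_le_card hsub
    _ ≤ ∑ c ∈ C, (Finset.univ.filter fun x => hammingDist x c ≤ d - 1).card :=
        Finset.card_biUnion_le
    _ = C.card * (Finset.univ.filter (fun z : Fin k → ZMod 5 => hammingNorm z ≤ d - 1)).card := by
        rw [Finset.sum_congr rfl (fun c _ => ball_translate k (d-1) c), Finset.sum_const,
          smul_eq_mul]

lemma exponent_ineq (n k : ℕ) (δ ε lam : ℝ) (hε : 0 < ε)
    (hH0 : 0 ≤ H5 (2*δ)) (hHlam : H5 lam ≤ H5 (2*δ) + ε)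
    (hk1 : (n:ℝ) ≤ 2*(k:ℝ)+1) (hkn : 2*(k:ℝ) ≤ (n:ℝ))
    (hB2 : 2*Real.log 5 ≤ (n:ℝ)*ε) :
    (n:ℝ) * ((1/2)*Real.log 5 + (1/2)*(Real.log 5 - H5 (2*δ)) - ε)
      ≤ 2*(k:ℝ)*Real.log 5 - (k:ℝ)*H5 lam := by
  have hlog5 : 0 < Real.log 5 := Real.log_pos (by norm_num)
  have hkn2 : (k:ℝ) ≤ (n:ℝ)/2 := by linarith
  have hklam : (k:ℝ)*H5 lam ≤ ((n:ℝ)/2)*(H5 (2*δ) + ε) := by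
    have l1 : (k:ℝ)*H5 lam ≤ (k:ℝ)*(H5 (2*δ) + ε) :=
      mul_le_mul_of_nonneg_left hHlam (Nat.cast_nonneg _)
    have l2 : (k:ℝ)*(H5 (2*δ) + ε) ≤ ((n:ℝ)/2)*(H5 (2*δ) + ε) :=
      mul_le_mul_of_nonneg_right hkn2 (by linarith)
    linarith
  have hc : (n:ℝ) - 1 ≤ 2*(k:ℝ) := by linarith
  have hlog5n : ((n:ℝ) - 1)*Real.log 5 ≤ 2*(k:ℝ)*Real.log 5 :=
    mul_le_mul_of_nonneg_right hc hlog5.le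
  linarith [hklam, hlog5n, hB2]

lemma final_card (n k N : ℕ) (δ ε lam : ℝ) (hε : 0 < ε)
    (hH0 : 0 ≤ H5 (2*δ)) (hHlam : H5 lam ≤ H5 (2*δ) + ε)
    (hk1 : (n:ℝ) ≤ 2*(k:ℝ)+1) (hkn : 2*(k:ℝ) ≤ (n:ℝ))
    (hB2 : 2*Real.log 5 ≤ (n:ℝ)*ε)
    (hcard1 : (5:ℝ)^k ≤ (N:ℝ) * Real.exp ((k:ℝ)*H5 lam)) :
    Real.exp ((n:ℝ) * ((1/2)*Real.log 5 + (1/2)*(Real.log 5 - H5 (2*δ)) - ε))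
      ≤ ((N * 5^k : ℕ) : ℝ) := by
  have hexp : (0:ℝ) < Real.exp ((k:ℝ) * H5 lam) := Real.exp_pos _
  have h5k : (5:ℝ)^k = Real.exp ((k:ℝ) * Real.log 5) := by
    rw [Real.exp_nat_mul, Real.exp_log (by norm_num)]
  calc Real.exp ((n:ℝ) * ((1/2)*Real.log 5 + (1/2)*(Real.log 5 - H5 (2*δ)) - ε))
      ≤ Real.exp (2*(k:ℝ)*Real.log 5 - (k:ℝ)*H5 lam) :=
        Real.exp_le_exp.mpr (exponent_ineq n k δ ε lam hε hH0 hHlam hk1 hkn hB2)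
    _ ≤ (N : ℝ) * 5^k := by
        rw [show 2*(k:ℝ)*Real.log 5 - (k:ℝ)*H5 lam
          = ((k:ℝ)*Real.log 5 - (k:ℝ)*H5 lam) + (k:ℝ)*Real.log 5 by ring,
          Real.exp_add]
        have e1 : Real.exp ((k:ℝ)*Real.log 5 - (k:ℝ)*H5 lam) ≤ (N:ℝ) := by
          rw [Real.exp_sub, ← h5k, div_le_iff₀ hexp]
          exact hcard1
        rw [← h5k]
        exact mul_le_mul_of_nonneg_right e1 (by positivity)
    _ = ((N * 5^k : ℕ) : ℝ) := by push_cast; ring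

def enc (n k : ℕ) (c u : Fin k → ZMod 5) : Fin n → ZMod 5 :=
  fun i => if h2 : i.val / 2 < k then
      (if i.val % 2 = 0 then u ⟨i.val/2, h2⟩ else c ⟨i.val/2, h2⟩ + 2 * u ⟨i.val/2, h2⟩)
    else 0

lemma enc_even {n k : ℕ} (c u : Fin k → ZMod 5) (j : Fin k) (hj : 2*j.val < n) :
    enc n k c u ⟨2*j.val, hj⟩ = u j := by
  have h2 : (2*j.val)/2 < k := by have := j.isLt; omega
  simp only [enc]
  rw [dif_pos h2, if_pos (by omega)]
  congr 1
  exact Fin.ext (show 2*j.val/2 = j.val by omega)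

lemma enc_odd {n k : ℕ} (c u : Fin k → ZMod 5) (j : Fin k) (hj : 2*j.val+1 < n) :
    enc n k c u ⟨2*j.val+1, hj⟩ = c j + 2 * u j := by
  have h2 : (2*j.val+1)/2 < k := by have := j.isLt; omega
  simp only [enc]
  rw [dif_pos h2, if_neg (by omega)]
  have : (⟨(2*j.val+1)/2, h2⟩ : Fin k) = j := Fin.ext (show (2*j.val+1)/2 = j.val by omega)
  rw [this]

lemma enc_injOn {n k : ℕ} (h : 2*k ≤ n) :
    Set.InjOn (fun p : (Fin k → ZMod 5) × (Fin k → ZMod 5) => enc n k p.1 p.2) Set.univ := by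
  rintro ⟨c, u⟩ - ⟨c', u'⟩ - heq
  simp only at heq
  have hu : u = u' := by
    funext j
    have hj : 2*j.val < n := by have := j.isLt; omega
    have := congrFun heq ⟨2*j.val, hj⟩
    rwa [enc_even, enc_even] at this
  have hc : c = c' := by
    funext j
    have hj : 2*j.val+1 < n := by have := j.isLt; omega
    have h3 := congrFun heq ⟨2*j.val+1, hj⟩
    rw [enc_odd, enc_odd, hu] at h3
    exact add_right_cancel h3
  rw [hu, hc]

lemma ham_enc {n k : ℕ} (h : 2*k ≤ n) (c c' u u' : Fin k → ZMod 5) :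
    hammingDist c c' ≤ hammingDist (enc n k c u) (enc n k c' u') := by
  rw [hammingDist, hammingDist]
  have hb1 : ∀ j : Fin k, 2*j.val < n := fun j => by have := j.isLt; omega
  have hb2 : ∀ j : Fin k, 2*j.val+1 < n := fun j => by have := j.isLt; omega
  apply Finset.card_le_card_of_injOn
    (fun j => if enc n k c u ⟨2*j.val, hb1 j⟩ ≠ enc n k c' u' ⟨2*j.val, hb1 j⟩
      then (⟨2*j.val, hb1 j⟩ : Fin n)
      else ⟨2*j.val+1, hb2 j⟩)
  · intro j hj
    simp only [Finset.mem_coe, Finset.mem_filter, Finset.mem_univ, true_and] at hj ⊢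
    by_cases he : enc n k c u ⟨2*j.val, hb1 j⟩ ≠ enc n k c' u' ⟨2*j.val, hb1 j⟩
    · rw [if_pos he]; exact he
    · rw [if_neg he]
      push_neg at he
      rw [enc_even, enc_even] at he
      intro hodd
      rw [enc_odd, enc_odd, he] at hodd
      exact hj (add_right_cancel hodd)
  · intro j1 _ j2 _ heq
    dsimp only at heq
    by_cases h1 : enc n k c u ⟨2*j1.val, hb1 j1⟩ ≠ enc n k c' u' ⟨2*j1.val, hb1 j1⟩ <;>
      by_cases hh2 : enc n k c u ⟨2*j2.val, hb1 j2⟩ ≠ enc n k c' u' ⟨2*j2.val, hb1 j2⟩ <;>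
      [rw [if_pos h1, if_pos hh2] at heq; rw [if_pos h1, if_neg hh2] at heq;
       rw [if_neg h1, if_pos hh2] at heq; rw [if_neg h1, if_neg hh2] at heq] <;>
      simp only [Fin.mk.injEq] at heq <;> exact Fin.ext (by omega)

lemma hamming_le_cyc {n : ℕ} (x y : Fin n → ZMod 5) :
    (hammingDist x y : ℕ∞) ≤ cycDistN x y := by
  rw [cycDistN, hammingDist, Finset.card_filter, Nat.cast_sum]
  apply Finset.sum_le_sum
  intro i _
  by_cases h : x i = y i
  · simp [h]
  · rw [if_pos h, cycDist, if_neg h]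
    split
    · exact le_refl _
    · exact le_top

lemma cycDistN_top {n : ℕ} (x y : Fin n → ZMod 5) (i : Fin n)
    (h : cycDist 5 (x i) (y i) = ⊤) : cycDistN x y = ⊤ := by
  rw [cycDistN, eq_top_iff, ← h]
  exact Finset.single_le_sum (f := fun j => cycDist 5 (x j) (y j)) (fun j _ => zero_le)
    (Finset.mem_univ i)

lemma cycDist_top_of (x y : ZMod 5) (hw : x - y = 2 ∨ x - y = 3) : cycDist 5 x y = ⊤ := by
  have h1 : x ≠ y := by
    intro h; subst h
    rcases hw with h | h <;> rw [sub_self] at h <;> exact absurd h (by decide)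
  have h2 : ¬(x - y = 1 ∨ y - x = 1) := by
    rintro (h3 | h3)
    · rcases hw with h | h <;> rw [h3] at h <;> exact absurd h (by decide)
    · have h4 : x - y = -1 := by rw [← neg_sub, h3]
      rcases hw with h | h <;> rw [h4] at h <;> exact absurd h (by decide)
  rw [cycDist, if_neg h1, if_neg h2]

lemma cycDist_top_far (x y : ZMod 5) (hne : x ≠ y) (h : ¬(x - y = 1 ∨ y - x = 1)) :
    cycDist 5 x y = ⊤ := by
  rw [cycDist, if_neg hne, if_neg h]

lemma enc_cyc_dist {n k : ℕ} (h : 2*k ≤ n) (d : ℕ) (C' : Finset (Fin k → ZMod 5))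
    (hC' : ∀ c ∈ C', ∀ c' ∈ C', c ≠ c' → d ≤ hammingDist c c')
    (c u c' u' : Fin k → ZMod 5) (hc : c ∈ C') (hc' : c' ∈ C')
    (hne : (c, u) ≠ (c', u')) :
    (d : ℕ∞) ≤ cycDistN (enc n k c u) (enc n k c' u') := by
  by_cases hcc : c = c'
  · subst hcc
    have hu : u ≠ u' := by
      intro h'; exact hne (by rw [h'])
    obtain ⟨j, hj⟩ := Function.ne_iff.mp hu
    have hb1 : 2*j.val < n := by have := j.isLt; omega
    have hb2 : 2*j.val+1 < n := by have := j.isLt; omega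
    by_cases hcond : u j - u' j = 1 ∨ u' j - u j = 1
    · have hw : (c j + 2*u j) - (c j + 2*u' j) = 2 ∨ (c j + 2*u j) - (c j + 2*u' j) = 3 := by
        have e : (c j + 2*u j) - (c j + 2*u' j) = 2*(u j - u' j) := by ring
        rcases hcond with h' | h'
        · left; rw [e, h', mul_one]
        · right
          rw [e, show u j - u' j = -1 by rw [← neg_sub, h']]
          decide
      have htop : cycDist 5 (enc n k c u ⟨2*j.val+1, hb2⟩) (enc n k c u' ⟨2*j.val+1, hb2⟩) = ⊤ := by
        rw [enc_odd, enc_odd]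
        exact cycDist_top_of _ _ hw
      rw [cycDistN_top _ _ ⟨2*j.val+1, hb2⟩ htop]
      exact le_top
    · have htop : cycDist 5 (enc n k c u ⟨2*j.val, hb1⟩) (enc n k c u' ⟨2*j.val, hb1⟩) = ⊤ := by
        rw [enc_even, enc_even]
        exact cycDist_top_far _ _ hj hcond
      rw [cycDistN_top _ _ ⟨2*j.val, hb1⟩ htop]
      exact le_top
  · have h1 : d ≤ hammingDist c c' := hC' c hc c' hc' hcc
    calc (d:ℕ∞) ≤ (hammingDist (enc n k c u) (enc n k c' u') : ℕ∞) := by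
          exact_mod_cast le_trans h1 (ham_enc h c c' u u')
      _ ≤ _ := hamming_le_cyc _ _

end Aux

theorem stmt19 (δ : ℝ) (hδ0 : 0 ≤ δ) (hδ : δ < 2 / 5) (ε : ℝ) (hε : 0 < ε) :
    ∀ᶠ n : ℕ in Filter.atTop, ∃ C : Finset (Fin n → ZMod 5),
      (∀ x ∈ C, ∀ y ∈ C, x ≠ y → ((⌈δ * n⌉₊ : ℕ∞)) ≤ cycDistN x y) ∧
      Real.exp (n * ((1 / 2) * Real.log 5 +
        (1 / 2) * (Real.log 5 - H5 (2 * δ)) - ε)) ≤ (C.card : ℝ) := by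
  rcases eq_or_lt_of_le hδ0 with h0 | h0
  · -- δ = 0
    subst h0
    refine Filter.Eventually.of_forall (fun n => ⟨Finset.univ, ?_, ?_⟩)
    · intro x _ y _ _
      simp
    · have hH : H5 (2 * 0) = 0 := by
        simp [H5]
      rw [hH]
      have hcard : ((Finset.univ : Finset (Fin n → ZMod 5)).card : ℝ) = 5 ^ n := by
        rw [Finset.card_univ, Fintype.card_fun, ZMod.card, Fintype.card_fin]
        push_cast; ring
      rw [hcard]
      have h5n : ((5:ℝ)) ^ n = Real.exp (n * Real.log 5) := by
        rw [Real.exp_nat_mul, Real.exp_log (by norm_num)]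
      rw [h5n]
      apply Real.exp_le_exp.mpr
      have hlog5 : 0 < Real.log 5 := Real.log_pos (by norm_num)
      have hn : (0:ℝ) ≤ n := Nat.cast_nonneg n
      nlinarith
  · -- δ > 0
    -- choose lam
    have h2δ : 0 < 2*δ := by linarith
    have h2δ45 : 2*δ < 4/5 := by linarith
    have hcont : ContinuousAt H5 (2*δ) := by
      have c0 : ContinuousAt (fun x : ℝ => Real.log x) (2*δ) :=
        Real.continuousAt_log (ne_of_gt h2δ)
      have c1 : ContinuousAt (fun x : ℝ => Real.log (1 - x)) (2*δ) := by
        have := (Real.continuousAt_log (x := 1 - 2*δ) (by intro hc; nlinarith)).comp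
          (g := Real.log) (f := fun x : ℝ => 1 - x)
          (continuousAt_const.sub continuousAt_id)
        exact this
      exact ((continuousAt_id.mul continuousAt_const).sub (continuousAt_id.mul c0)).sub
        ((continuousAt_const.sub continuousAt_id).mul c1)
    have hev : ∀ᶠ x in nhds (2*δ), H5 x < H5 (2*δ) + ε :=
      hcont.eventually_lt_const (lt_add_of_pos_right _ hε)
    have hev2 : ∀ᶠ x in nhds (2*δ), x < 4/5 := eventually_lt_nhds h2δ45
    obtain ⟨lam, ⟨hlamH, hlam45⟩, hlamgt⟩ :=
      ((((hev.and hev2).filter_mono (nhdsWithin_le_nhds (s := Set.Ioi (2*δ))))).and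
        eventually_mem_nhdsWithin).exists
    rw [Set.mem_Ioi] at hlamgt
    have hlam0 : 0 < lam := lt_trans h2δ hlamgt
    -- eventual conditions on n
    have hlog5 : 0 < Real.log 5 := Real.log_pos (by norm_num)
    set A : ℝ := 2*δ/(lam - 2*δ) + 1 with hA
    set B : ℝ := 2*Real.log 5/ε with hBdef
    filter_upwards [Filter.eventually_ge_atTop 1,
      Filter.eventually_ge_atTop (⌈A⌉₊ + 1),
      Filter.eventually_ge_atTop ⌈B⌉₊] with n hn1 hnA hnB
    -- basic quantities
    set k := n / 2 with hk
    have hk2 : 2*k ≤ n := by omega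
    have hk1 : n ≤ 2*k + 1 := by omega
    set d := ⌈δ * n⌉₊ with hd
    have hd0 : 0 < d := by
      rw [hd]
      apply Nat.ceil_pos.mpr
      have : (1:ℝ) ≤ n := by exact_mod_cast hn1
      nlinarith
    -- real versions
    have hkr : ((n:ℝ) - 1)/2 ≤ (k:ℝ) := by
      have : (n:ℝ) ≤ 2*k + 1 := by exact_mod_cast hk1
      linarith
    have hkn : 2*(k:ℝ) ≤ (n:ℝ) := by exact_mod_cast hk2
    have hnAr : A + 1 ≤ (n:ℝ) := by
      have h1 : ((⌈A⌉₊:ℝ) + 1) ≤ (n:ℝ) := by exact_mod_cast hnA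
      have := Nat.le_ceil A
      linarith
    have hnBr : B ≤ (n:ℝ) := by
      have h1 : ((⌈B⌉₊:ℝ)) ≤ (n:ℝ) := by exact_mod_cast hnB
      have := Nat.le_ceil B
      linarith
    have hlamδ : 0 < lam - 2*δ := by linarith
    -- m ≤ lam k
    have hm : ((d - 1 : ℕ):ℝ) ≤ lam * k := by
      have hcast : ((d - 1 : ℕ):ℝ) = (d:ℝ) - 1 := by
        have : 1 ≤ d := hd0
        push_cast [Nat.cast_sub this]
        ring
      rw [hcast]
      have hceil : (d:ℝ) < δ * n + 1 := by
        rw [hd]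
        exact Nat.ceil_lt_add_one (by positivity)
      -- δ * n ≤ lam * k
      have hdn : δ * n ≤ lam * k := by
        have h1 : δ * n ≤ δ * (2*(k:ℝ)+1) := by
          have hc : (n:ℝ) ≤ 2*(k:ℝ)+1 := by exact_mod_cast hk1
          exact mul_le_mul_of_nonneg_left hc h0.le
        have h2 : 2*δ/(lam - 2*δ) ≤ (n:ℝ) - 1 := by
          rw [hA] at hnAr; linarith
        have h3 : 2*δ ≤ ((n:ℝ) - 1) * (lam - 2*δ) := by
          rw [div_le_iff₀ hlamδ] at h2; linarith
        -- (lam - 2δ) * k ≥ δ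
        have h4a : (lam-2*δ) * (((n:ℝ)-1)/2) ≤ (lam-2*δ)*(k:ℝ) :=
          mul_le_mul_of_nonneg_left hkr hlamδ.le
        have h4 : δ ≤ (lam - 2*δ) * (k:ℝ) := by nlinarith
        nlinarith
      linarith
    -- GV code
    obtain ⟨C', hC'dist, hC'card⟩ := gv k d hd0
    set V := (Finset.univ.filter (fun z : Fin k → ZMod 5 => hammingNorm z ≤ d - 1)).card with hV
    have hVle : (V:ℝ) ≤ Real.exp (k * H5 lam) :=
      ball_card_le k (d-1) lam hlam0 hlam45.le hm
    clear_value k d V A B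
    clear hm hd hk hV hnAr hkr hn1 hnA hnB hev hev2 hcont
    -- the code
    refine ⟨(C' ×ˢ Finset.univ).image (fun p => enc n k p.1 p.2), ?_, ?_⟩
    · intro x hx y hy hxy
      obtain ⟨⟨c, u⟩, hcu, rfl⟩ := Finset.mem_image.mp hx
      obtain ⟨⟨c', u'⟩, hcu', rfl⟩ := Finset.mem_image.mp hy
      have hc : c ∈ C' := (Finset.mem_product.mp hcu).1
      have hc' : c' ∈ C' := (Finset.mem_product.mp hcu').1
      have hne : (c, u) ≠ (c', u') := fun hEq => hxy (by rw [hEq])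
      exact enc_cyc_dist hk2 d C' hC'dist c u c' u' hc hc' hne
    · -- cardinality
      have hinj : Set.InjOn (fun p : (Fin k → ZMod 5) × (Fin k → ZMod 5) => enc n k p.1 p.2)
          ((C' ×ˢ (Finset.univ : Finset (Fin k → ZMod 5)) : Finset _) : Set _) :=
        (enc_injOn hk2).mono (Set.subset_univ _)
      rw [Finset.card_image_of_injOn hinj, Finset.card_product, Finset.card_univ,
        Fintype.card_fun, ZMod.card, Fintype.card_fin]
      have hexp : (0:ℝ) < Real.exp ((k:ℝ) * H5 lam) := Real.exp_pos _
      have hcard1 : (5:ℝ)^k ≤ (C'.card : ℝ) * Real.exp ((k:ℝ) * H5 lam) := by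
        have h1 : (5:ℝ)^k ≤ (C'.card : ℝ) * V := by exact_mod_cast hC'card
        have h2 : (C'.card : ℝ) * V ≤ (C'.card : ℝ) * Real.exp ((k:ℝ) * H5 lam) :=
          mul_le_mul_of_nonneg_left hVle (Nat.cast_nonneg _)
        linarith
      have hk1r : (n:ℝ) ≤ 2*(k:ℝ)+1 := by exact_mod_cast hk1
      have hB2 : 2*Real.log 5 ≤ (n:ℝ)*ε := by
        rw [hBdef, div_le_iff₀ hε] at hnBr
        linarith
      have hH0 : 0 ≤ H5 (2*δ) := H5_nonneg (by linarith) (by linarith)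
      exact final_card n k C'.card δ ε lam hε hH0 hlamH.le hk1r hkn hB2 hcard1
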